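/- Let C = v_1, ..., v_k be a chordless cycle of degree-3 vertices in a graph G, and let w_i be the unique neighbor of v_i outside C. If for some i, w_i and w_{i+1} (indices mod k) are adjacent in G, then G is 3-vertex-colorable if and only if G \ C is 3-vertex-colorable. -/

import Mathlib

/-- Pick a color different from both `a` and `b` (possible since there are 3 colors). -/
def pick3 (a b : Fin 3) : Fin 3 :=
  if a ≠ 0 ∧ b ≠ 0 then 0 else if a ≠ 1 ∧ b ≠ 1 then 1 else 2

lemma pick3_ne : ∀ a b : Fin 3, pick3 a b ≠ a ∧ pick3 a b ≠ b := by decide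

/-- Let `v 0, ..., v (k-1)` be a chordless cycle of degree-3 vertices in `G`, and `w i`
the (unique) neighbor of `v i` outside the cycle.  If some `w i` and `w (i+1)` are
adjacent, then `G` is 3-colorable iff `G` minus the cycle is 3-colorable. -/
theorem stmt1 {V : Type} [Fintype V] [DecidableEq V] (G : SimpleGraph V) [DecidableRel G.Adj]
    (k : ℕ) (hk : 3 ≤ k) (v w : ZMod k → V)
    (hinj : Function.Injective v)
    (hcyc : ∀ i, G.Adj (v i) (v (i + 1)))
    (hchordless : ∀ i j, G.Adj (v i) (v j) → j = i + 1 ∨ i = j + 1)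
    (hdeg : ∀ i, G.degree (v i) = 3)
    (hw : ∀ i, G.Adj (v i) (w i) ∧ w i ∉ Set.range v)
    (hadj : ∃ i, G.Adj (w i) (w (i + 1))) :
    G.Colorable 3 ↔ (G.induce {x : V | x ∉ Set.range v}).Colorable 3 := by
  haveI : NeZero k := ⟨by omega⟩
  constructor
  · rintro ⟨c⟩
    exact ⟨SimpleGraph.Coloring.mk (fun x => c x.1)
      (fun hab => c.valid (by simpa using hab))⟩
  · rintro ⟨c0⟩
    obtain ⟨i0, hadj0⟩ := hadj
    -- basic arithmetic facts
    have htwo : (2 : ZMod k) ≠ 0 := by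
      intro h2
      have h2' : ((2 : ℕ) : ZMod k) = 0 := by exact_mod_cast h2
      rw [ZMod.natCast_eq_zero_iff] at h2'
      exact absurd (Nat.le_of_dvd (by norm_num) h2') (by omega)
    have hvv : ∀ i : ZMod k, ((i.val : ℕ) : ZMod k) = i := fun i =>
      ZMod.natCast_rightInverse i
    -- each v i has neighbors exactly v (i-1), v (i+1), w i
    have hnbr : ∀ i y, G.Adj (v i) y → y = v (i - 1) ∨ y = v (i + 1) ∨ y = w i := by
      intro i y hy
      have h1 : G.Adj (v i) (v (i + 1)) := hcyc i
      have h2 : G.Adj (v i) (v (i - 1)) := by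
        have := hcyc (i - 1); rw [sub_add_cancel] at this; exact this.symm
      have h3 : G.Adj (v i) (w i) := (hw i).1
      have hne1 : v (i - 1) ≠ v (i + 1) := by
        intro he
        exact htwo (by linear_combination - (hinj he))
      have hsub : ({v (i - 1), v (i + 1), w i} : Finset V) ⊆ G.neighborFinset (v i) := by
        intro x hx
        simp only [Finset.mem_insert, Finset.mem_singleton] at hx
        rcases hx with rfl | rfl | rfl <;> simp [SimpleGraph.mem_neighborFinset, h1, h2, h3]
      have hcard : ({v (i - 1), v (i + 1), w i} : Finset V).card = 3 := by
        rw [Finset.card_insert_of_notMem, Finset.card_insert_of_notMem, Finset.card_singleton]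
        · intro hm
          exact (hw i).2 ⟨i + 1, Finset.mem_singleton.1 hm⟩
        · intro hm
          rcases Finset.mem_insert.1 hm with h | h
          · exact hne1 h
          · exact (hw i).2 ⟨i - 1, Finset.mem_singleton.1 h⟩
      have heq : ({v (i - 1), v (i + 1), w i} : Finset V) = G.neighborFinset (v i) :=
        Finset.eq_of_subset_of_card_le hsub
          (by rw [hcard]; rw [← hdeg i]; exact le_of_eq (G.card_neighborFinset_eq_degree (v i)))
      have hy' : y ∈ G.neighborFinset (v i) := (SimpleGraph.mem_neighborFinset _ _ _).2 hy
      rw [← heq] at hy'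
      simpa using hy'
    -- colors of the outside neighbors
    set cw : ZMod k → Fin 3 := fun i => c0 ⟨w i, (hw i).2⟩ with hcw
    have hcw01 : cw i0 ≠ cw (i0 + 1) := c0.valid (by simpa using hadj0)
    -- the greedy coloring along the cycle, starting at i0 + 1
    set f : ℕ → Fin 3 := fun n =>
      Nat.rec (cw i0) (fun n prev => pick3 (cw (i0 + 2 + (n : ZMod k))) prev) n with hf
    have hf0 : f 0 = cw i0 := rfl
    have hfs : ∀ n, f (n + 1) = pick3 (cw (i0 + 2 + (n : ZMod k))) (f n) := fun n => rfl
    have hfne : ∀ n, f (n + 1) ≠ f n := fun n =>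
      (pick3_ne (cw (i0 + 2 + (n : ZMod k))) (f n)).2
    have hfw : ∀ n : ℕ, f n ≠ cw (i0 + 1 + (n : ZMod k)) := by
      intro n
      cases n with
      | zero => simpa [hf0] using hcw01
      | succ n =>
        rw [hfs n]
        have := (pick3_ne (cw (i0 + 2 + (n : ZMod k))) (f n)).1
        have harith : i0 + 1 + ((n + 1 : ℕ) : ZMod k) = i0 + 2 + (n : ZMod k) := by
          push_cast; ring
        rw [harith]
        exact this
    have hlast : f (k - 1) ≠ f 0 := by
      have h1 : k - 1 = (k - 2) + 1 := by omega
      have harith : i0 + 2 + ((k - 2 : ℕ) : ZMod k) = i0 := by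
        have : ((k - 2 : ℕ) : ZMod k) = -2 := by
          push_cast [Nat.cast_sub (by omega : 2 ≤ k)]
          simp [ZMod.natCast_self]
        rw [this]; ring
      have hne : f (k - 1) ≠ cw (i0 + 2 + ((k - 2 : ℕ) : ZMod k)) := by
        rw [h1, hfs]
        exact (pick3_ne _ _).1
      rw [harith] at hne
      rw [hf0]
      exact hne
    -- the full coloring
    set col : V → Fin 3 := fun x =>
      if h : x ∈ Set.range v then f ((Classical.choose h - (i0 + 1)).val)
      else c0 ⟨x, h⟩ with hcol
    have hcol_v : ∀ i, col (v i) = f ((i - (i0 + 1)).val) := by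
      intro i
      have hmem : v i ∈ Set.range v := ⟨i, rfl⟩
      simp only [hcol, dif_pos hmem]
      rw [hinj (Classical.choose_spec hmem)]
    have hcol_o : ∀ x (hx : x ∉ Set.range v), col x = c0 ⟨x, hx⟩ := by
      intro x hx
      simp only [hcol, dif_neg hx]
    -- key: consecutive cycle vertices get different colors
    have key : ∀ i : ZMod k, f ((i - (i0 + 1)).val) ≠ f ((i + 1 - (i0 + 1)).val) := by
      intro i
      set n := (i - (i0 + 1)).val with hn
      have hnlt : n < k := ZMod.val_lt _
      have hcast : ((n : ℕ) : ZMod k) = i - (i0 + 1) := hvv _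
      by_cases hnk : n = k - 1
      · have hik : i = i0 := by
          have : i - (i0 + 1) = -1 := by
            rw [← hcast, hnk]
            push_cast [Nat.cast_sub (by omega : 1 ≤ k)]
            simp [ZMod.natCast_self]
          have := sub_eq_iff_eq_add.1 this
          rw [this]; ring
        have h01 : (i + 1 - (i0 + 1)).val = 0 := by
          rw [hik]; simp
        rw [hnk, h01]
        exact hlast
      · have h1 : (i + 1 - (i0 + 1)) = ((n + 1 : ℕ) : ZMod k) := by
          push_cast [hcast]; ring
        have h2 : (i + 1 - (i0 + 1)).val = n + 1 := by
          rw [h1, ZMod.val_cast_of_lt (by omega : n + 1 < k)]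
        rw [h2]
        exact (hfne n).symm
    -- validity for edges with at least one endpoint on the cycle
    have main : ∀ a b, G.Adj a b → a ∈ Set.range v → col a ≠ col b := by
      rintro a b hab ⟨i, rfl⟩
      by_cases hb : b ∈ Set.range v
      · obtain ⟨j, rfl⟩ := hb
        rcases hchordless i j hab with rfl | rfl
        · rw [hcol_v, hcol_v]; exact key i
        · rw [hcol_v, hcol_v]; exact (key j).symm
      · have hbw : b = w i := by
          rcases hnbr i b hab with h | h | h
          · exact absurd ⟨i - 1, h.symm⟩ hb
          · exact absurd ⟨i + 1, h.symm⟩ hb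
          · exact h
        rw [hcol_v, hcol_o b hb]
        subst hbw
        have := hfw ((i - (i0 + 1)).val)
        have harith : i0 + 1 + (((i - (i0 + 1)).val : ℕ) : ZMod k) = i := by
          rw [hvv]; ring
        rw [harith] at this
        exact this
    refine ⟨SimpleGraph.Coloring.mk col ?_⟩
    intro a b hab
    by_cases ha : a ∈ Set.range v
    · exact main a b hab ha
    · by_cases hb : b ∈ Set.range v
      · exact (main b a hab.symm hb).symm
      · rw [hcol_o a ha, hcol_o b hb]
        exact c0.valid (by simpa using hab)
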